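/- Suppose T is an ω₁-tree and S₁, S₂ are sets of countable limit ordinals whose symmetric difference is nonstationary. Then T is S₁-*-special (in the weak sense) if and only if T is S₂-*-special (in the weak sense). -/

import Mathlib

open Cardinal Set

/-- The first uncountable ordinal. -/
noncomputable def omega1 : Ordinal := (Cardinal.aleph 1).ord

universe v

/-- A tree of height `ω₁`: a partial order equipped with a rank (height) function into the
countable ordinals which is strictly monotone, has countable levels, and whose sets of
predecessors are linearly ordered. -/
structure OmegaOneTree (T : Type*) [PartialOrder T] where
  rk : T → Ordinal.{v}
  rk_lt_omega1 : ∀ x, rk x < omega1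
  rk_strictMono : ∀ {x y : T}, x < y → rk x < rk y
  levels_countable : ∀ β : Ordinal, {x : T | rk x = β}.Countable
  pred_linear : ∀ x y z : T, y ≤ x → z ≤ x → y ≤ z ∨ z ≤ y

/-- `C` is a closed unbounded subset of `ω₁`. -/
def IsClubBelow (C : Set Ordinal) : Prop :=
  C ⊆ Set.Iio omega1 ∧ (∀ α < omega1, ∃ β ∈ C, α < β) ∧
    ∀ δ, 0 < δ → δ < omega1 → (∀ β < δ, ∃ γ ∈ C, β < γ ∧ γ < δ) → δ ∈ C

/-- `S` is a stationary subset of `ω₁`. -/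
def IsStationaryBelow (S : Set Ordinal) : Prop :=
  S ⊆ Set.Iio omega1 ∧ ∀ C, IsClubBelow C → (S ∩ C).Nonempty

/-- `T` is `S`-*-special in the weak sense: there is a regressive `f : T_S → ω₁` such that
whenever `f x = f y = f z`, `x < y` and `x < z`, then `y` and `z` are comparable. -/
def WeakStarSpecial {T : Type*} [PartialOrder T] (t : OmegaOneTree T) (S : Set Ordinal) :
    Prop :=
  ∃ f : {x : T // t.rk x ∈ S} → Ordinal,
    (∀ x : {x : T // t.rk x ∈ S}, f x < t.rk (x : T)) ∧
    ∀ x y z : {x : T // t.rk x ∈ S}, f x = f y → f x = f z →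
      (x : T) < (y : T) → (x : T) < (z : T) → ((y : T) ≤ (z : T) ∨ (z : T) ≤ (y : T))

namespace Stmt3Aux
open Ordinal

lemma add_nat_lt {δ a : Ordinal} (hδ : Order.IsSuccLimit δ) (ha : a < δ) (n : ℕ) : a + n < δ := by
  induction n with
  | zero => simpa
  | succ k ih =>
    have h : a + ((k + 1 : ℕ) : Ordinal) = Order.succ (a + k) := by
      push_cast
      rw [← add_assoc, Ordinal.add_one_eq_succ]
    rw [h]
    exact hδ.succ_lt ih

lemma two_mul_add_one_lt {δ a : Ordinal} (hδ : Order.IsSuccLimit δ) (ha : a < δ) : 2 * a + 1 < δ := by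
  obtain ⟨hδ0, c, rfl⟩ := Ordinal.isSuccLimit_iff_omega0_dvd.mp hδ
  have hmod : ω * (a / ω) + a % ω = a := Ordinal.div_add_mod a ω
  obtain ⟨n, hn⟩ := Ordinal.lt_omega0.mp (Ordinal.mod_lt a Ordinal.omega0_ne_zero)
  have h2ω : (2 : Ordinal) * ω = ω := by
    have := Ordinal.natCast_mul_omega0 (n := 2) (by norm_num)
    simpa using this
  set q := a / ω with hqdef
  have key : 2 * a + 1 = ω * q + ((2 * n + 1 : ℕ) : Ordinal) := by
    rw [← hmod, hn, mul_add, ← mul_assoc, h2ω]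
    push_cast
    rw [add_assoc]
  rw [key]
  have hq : q < c := (Ordinal.div_lt Ordinal.omega0_ne_zero).mpr ha
  calc ω * q + ((2 * n + 1 : ℕ) : Ordinal)
      < ω * q + ω := by
        exact add_lt_add_right (Ordinal.nat_lt_omega0 _) _
    _ = ω * (Order.succ q) := (Ordinal.mul_succ _ _).symm
    _ ≤ ω * c := mul_le_mul_right (Order.succ_le_of_lt hq) _

lemma two_mul_lt {δ a : Ordinal} (hδ : Order.IsSuccLimit δ) (ha : a < δ) : 2 * a < δ :=
  lt_of_le_of_lt le_self_add (two_mul_add_one_lt hδ ha)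

lemma two_mul_ne {b c : Ordinal} : 2 * b ≠ 2 * c + 1 := by
  intro h
  rcases lt_trichotomy b c with hbc | rfl | hbc
  · have h1 : (2 : Ordinal) * b < 2 * c := (mul_lt_mul_iff_right₀ (by norm_num)).2 hbc
    have h2 : (2 : Ordinal) * c < 2 * c + 1 := lt_add_one _
    exact absurd h (ne_of_lt (h1.trans h2))
  · nth_rewrite 1 [show (2 : Ordinal) * b = 2 * b + 0 by rw [add_zero]] at h
    have := (add_right_inj (2 * b)).mp h
    simp at this
  · have h1 : Order.succ c ≤ b := Order.succ_le_of_lt hbc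
    have h2 : (2 : Ordinal) * Order.succ c ≤ 2 * b := mul_le_mul_right h1 _
    rw [← Ordinal.add_one_eq_succ, mul_add, mul_one] at h2
    rw [h] at h2
    have := (add_le_add_iff_left (a := 2 * c)).mp h2
    norm_num at this

lemma two_mul_left_cancel {b c : Ordinal} (h : 2 * b = 2 * c) : b = c := by
  rcases lt_trichotomy b c with hbc | rfl | hbc
  · exact absurd h (ne_of_lt ((mul_lt_mul_iff_right₀ (by norm_num)).2 hbc))
  · rfl
  · exact absurd h.symm (ne_of_lt ((mul_lt_mul_iff_right₀ (by norm_num)).2 hbc))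

lemma countable_Iic {γ : Ordinal} (hγ : γ < omega1) : (Set.Iic γ).Countable := by
  have hsucc : γ + 1 < omega1 := by
    have hlim : Order.IsSuccLimit (omega1 : Ordinal) := by
      rw [omega1]
      exact Cardinal.isSuccLimit_ord (Cardinal.aleph0_le_aleph 1)
    rw [Ordinal.add_one_eq_succ]
    exact hlim.succ_lt hγ
  have h1 : (Set.Iio (γ + 1)).Countable := by
    rw [← Cardinal.le_aleph0_iff_set_countable, Ordinal.mk_Iio_ordinal, Cardinal.lift_le_aleph0]
    have hcard : (γ + 1).card < Cardinal.aleph 1 := Cardinal.lt_ord.mp hsucc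
    rwa [← Cardinal.succ_aleph0, Order.lt_succ_iff] at hcard
  refine h1.mono ?_
  intro x hx
  exact lt_of_le_of_lt hx (lt_add_one γ)

lemma key {T : Type*} [PartialOrder T] (t : OmegaOneTree T) (S₁ S₂ C : Set Ordinal)
    (hS₂ : ∀ α ∈ S₂, α < omega1 ∧ Order.IsSuccLimit α)
    (hC : IsClubBelow C) (hdisj : Disjoint C (S₂ \ S₁)) :
    WeakStarSpecial t S₁ → WeakStarSpecial t S₂ := by
  rintro ⟨f, hreg, hcomp⟩
  classical
  set m : Ordinal → Ordinal := fun δ => sSup (C ∩ Set.Iio δ) with hm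
  have hbdd : ∀ δ : Ordinal, BddAbove (C ∩ Set.Iio δ) := fun δ => ⟨δ, fun x hx => hx.2.le⟩
  have hm_le : ∀ δ, m δ ≤ δ := fun δ => csSup_le' (fun γ hγ => hγ.2.le)
  have hub : ∀ δ γ, γ ∈ C → γ < δ → γ ≤ m δ := fun δ γ h1 h2 =>
    le_csSup (hbdd δ) ⟨h1, h2⟩
  have hnotinC : ∀ δ ∈ S₂ \ S₁, δ ∉ C := fun δ hδ hC' =>
    (Set.disjoint_left.mp hdisj hC') hδ
  have hm_lt : ∀ δ ∈ S₂ \ S₁, m δ < δ := by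
    intro δ hδ
    rcases lt_or_eq_of_le (hm_le δ) with h | h
    · exact h
    · exfalso
      obtain ⟨hδω, hδlim⟩ := hS₂ δ hδ.1
      apply hnotinC δ hδ
      refine hC.2.2 δ hδlim.pos hδω ?_
      intro β hβ
      have hβ' : β < m δ := by rw [h]; exact hβ
      obtain ⟨γ, hγ, hβγ⟩ := exists_lt_of_lt_csSup' (s := C ∩ Set.Iio δ) hβ'
      exact ⟨γ, hγ.1, hβγ, hγ.2⟩
  have hmC : ∀ δ ∈ S₂ \ S₁, 0 < m δ → m δ ∈ C := by
    intro δ hδ hpos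
    by_cases hin : m δ ∈ C
    · exact hin
    refine hC.2.2 (m δ) hpos (lt_trans (hm_lt δ hδ) (hS₂ δ hδ.1).1) ?_
    intro β hβ
    obtain ⟨γ, hγ, hβγ⟩ := exists_lt_of_lt_csSup' hβ
    refine ⟨γ, hγ.1, hβγ, lt_of_le_of_ne (hub δ γ hγ.1 hγ.2) ?_⟩
    intro hEq
    exact hin (hEq ▸ hγ.1)
  -- countability of classes
  have hbelow : ∀ γ : Ordinal, γ < omega1 → {x : T | t.rk x ≤ γ}.Countable := by
    intro γ hγ
    have hsub : {x : T | t.rk x ≤ γ} ⊆ ⋃ β ∈ Set.Iic γ, {x : T | t.rk x = β} := by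
      intro x hx
      exact Set.mem_biUnion hx rfl
    exact (((countable_Iic hγ).biUnion (fun β _ => t.levels_countable β))).mono hsub
  have hYcnt : ∀ μ : Ordinal,
      {x : T | t.rk x ∈ S₂ \ S₁ ∧ m (t.rk x) = μ}.Countable := by
    intro μ
    rcases Set.eq_empty_or_nonempty {x : T | t.rk x ∈ S₂ \ S₁ ∧ m (t.rk x) = μ} with he | hne
    · rw [he]; exact Set.countable_empty
    · obtain ⟨x₀, hx₀⟩ := hne
      have hμω : μ < omega1 := by
        rw [← hx₀.2]
        exact lt_trans (hm_lt _ hx₀.1) (t.rk_lt_omega1 x₀)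
      obtain ⟨γ, hγC, hμγ⟩ := hC.2.1 μ hμω
      have hγω : γ < omega1 := hC.1 hγC
      refine (hbelow γ hγω).mono ?_
      rintro x ⟨hx1, hx2⟩
      by_contra hlt
      simp only [Set.mem_setOf_eq, not_le] at hlt
      have h := hub (t.rk x) γ hγC hlt
      rw [hx2] at h
      exact absurd hμγ (not_lt.mpr h)
  choose e he using fun μ => Set.countable_iff_exists_injOn.mp (hYcnt μ)
  -- the injection on the new part
  set g : {x : T // t.rk x ∈ S₂ \ S₁} → Ordinal := fun x =>
    m (t.rk x.1) + (e (m (t.rk x.1)) x.1 : ℕ) with hg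
  have hglt : ∀ x : {x : T // t.rk x ∈ S₂ \ S₁}, g x < t.rk x.1 := fun x =>
    add_nat_lt (hS₂ _ x.2.1).2 (hm_lt _ x.2) _
  have hginj : Function.Injective g := by
    intro x y hxy
    rcases lt_trichotomy (m (t.rk x.1)) (m (t.rk y.1)) with hμ | hμ | hμ
    · exfalso
      have hy0 : 0 < m (t.rk y.1) := lt_of_le_of_lt zero_le hμ
      have hyC : m (t.rk y.1) ∈ C := hmC _ y.2 hy0
      have h1 : m (t.rk y.1) ≤ g y := le_self_add
      have h2 : g x < t.rk x.1 := hglt x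
      rw [hxy] at h2
      exact absurd (hub (t.rk x.1) _ hyC (lt_of_le_of_lt h1 h2)) (not_le.mpr hμ)
    · have hxy' : m (t.rk x.1) + ((e (m (t.rk x.1)) x.1 : ℕ) : Ordinal)
          = m (t.rk x.1) + ((e (m (t.rk x.1)) y.1 : ℕ) : Ordinal) := by
        have h0 := hxy
        rw [hg] at h0
        simp only at h0
        rw [← hμ] at h0
        exact h0
      have hn : ((e (m (t.rk x.1)) x.1 : ℕ) : Ordinal) = ((e (m (t.rk x.1)) y.1 : ℕ) : Ordinal) :=
        (add_right_inj _).mp hxy'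
      have hn' : e (m (t.rk x.1)) x.1 = e (m (t.rk x.1)) y.1 := by exact_mod_cast hn
      have hmemx : x.1 ∈ {z : T | t.rk z ∈ S₂ \ S₁ ∧ m (t.rk z) = m (t.rk x.1)} := ⟨x.2, rfl⟩
      have hmemy : y.1 ∈ {z : T | t.rk z ∈ S₂ \ S₁ ∧ m (t.rk z) = m (t.rk x.1)} := ⟨y.2, hμ.symm⟩
      exact Subtype.ext (he (m (t.rk x.1)) hmemx hmemy hn')
    · exfalso
      have hx0 : 0 < m (t.rk x.1) := lt_of_le_of_lt zero_le hμ
      have hxC : m (t.rk x.1) ∈ C := hmC _ x.2 hx0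
      have h1 : m (t.rk x.1) ≤ g x := le_self_add
      have h2 : g y < t.rk y.1 := hglt y
      rw [← hxy] at h2
      exact absurd (hub (t.rk y.1) _ hxC (lt_of_le_of_lt h1 h2)) (not_le.mpr hμ)
  -- build the witness
  refine ⟨fun x => if h : t.rk x.1 ∈ S₁ then 2 * f ⟨x.1, h⟩ else 2 * g ⟨x.1, x.2, h⟩ + 1, ?_, ?_⟩
  · intro x
    by_cases h : t.rk x.1 ∈ S₁
    · simp only [dif_pos h]
      exact two_mul_lt (hS₂ _ x.2).2 (hreg ⟨x.1, h⟩)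
    · simp only [dif_neg h]
      exact two_mul_add_one_lt (hS₂ _ x.2).2 (hglt ⟨x.1, x.2, h⟩)
  · intro x y z hxy hxz hlt1 hlt2
    by_cases hx : t.rk x.1 ∈ S₁
    · by_cases hy : t.rk y.1 ∈ S₁
      · by_cases hz : t.rk z.1 ∈ S₁
        · simp only [dif_pos hx, dif_pos hy] at hxy
          simp only [dif_pos hx, dif_pos hz] at hxz
          exact hcomp ⟨x.1, hx⟩ ⟨y.1, hy⟩ ⟨z.1, hz⟩
            (two_mul_left_cancel hxy) (two_mul_left_cancel hxz) hlt1 hlt2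
        · simp only [dif_pos hx, dif_neg hz] at hxz
          exact absurd hxz two_mul_ne
      · simp only [dif_pos hx, dif_neg hy] at hxy
        exact absurd hxy two_mul_ne
    · by_cases hy : t.rk y.1 ∈ S₁
      · simp only [dif_neg hx, dif_pos hy] at hxy
        exact absurd hxy.symm two_mul_ne
      · simp only [dif_neg hx, dif_neg hy] at hxy
        exfalso
        have h1 : g ⟨x.1, x.2, hx⟩ = g ⟨y.1, y.2, hy⟩ := by
          apply two_mul_left_cancel
          rw [Ordinal.add_one_eq_succ, Ordinal.add_one_eq_succ] at hxy
          exact Order.succ_eq_succ_iff.mp hxy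
        have h2 := hginj h1
        have h3 : x.1 = y.1 := Subtype.mk_eq_mk.mp h2
        rw [h3] at hlt1
        exact lt_irrefl _ hlt1

end Stmt3Aux

/-- If `T` is an `ω₁`-tree and `S₁`, `S₂` are sets of countable limit
ordinals whose symmetric difference is nonstationary, then `T` is `S₁`-*-special (weak
sense) iff `T` is `S₂`-*-special (weak sense). -/
theorem stmt3 {T : Type*} [PartialOrder T] (t : OmegaOneTree T)
    (S₁ S₂ : Set Ordinal)
    (hS₁ : ∀ α ∈ S₁, α < omega1 ∧ Order.IsSuccLimit α)
    (hS₂ : ∀ α ∈ S₂, α < omega1 ∧ Order.IsSuccLimit α)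
    (hns : ∃ C, IsClubBelow C ∧ Disjoint C ((S₁ \ S₂) ∪ (S₂ \ S₁))) :
    WeakStarSpecial t S₁ ↔ WeakStarSpecial t S₂ := by
  obtain ⟨C, hC, hd⟩ := hns
  constructor
  · exact Stmt3Aux.key t S₁ S₂ C hS₂ hC (hd.mono_right Set.subset_union_right)
  · exact Stmt3Aux.key t S₂ S₁ C hS₁ hC (hd.mono_right Set.subset_union_left)
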